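/- Small support, part (c): Let n ∈ ℤ≥0, let N ∈ ℤ>0, let b ∈ [N/(N+1), 2N/(2N+1)), and let g ∈ V^n₊(ℝ) be even. Define z : [0,1] → ℂ by z(x) = b·ψ(x)/g(x) for x ∈ [0, 1−N(1/b−1)], z(x) = z_mid(x) for x ∈ (1−N(1/b−1), N(1/b−1)), and z(x) = −b·ψ(x)/g(x−1) for x ∈ [N(1/b−1), 1], where z_mid : (1−N(1/b−1), N(1/b−1)) → ℂ is measurable. Then h_z is even (h_z(x) = h_z(−x) for a.e. x ∈ ℝ) if and only if z_mid is antisymmetric around x = 1/2, i.e., z_mid(x) = −z_mid(1−x) for a.e. x ∈ (1−N(1/b−1), 1/2]. -/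

import Mathlib

open MeasureTheory Filter Topology Set

noncomputable section

attribute [local instance] Classical.propDecidable

/-- `kmax b` is the largest nonnegative integer strictly smaller than `b/(1-b)`. -/
def kmax (b : ℝ) : ℕ := ⌈b / (1 - b)⌉₊ - 1

/-- The window class `V⁺ⁿ(ℝ)`: `Cⁿ` functions with support exactly `[-1,1]`,
nonvanishing on `(-1,1)`. -/
def Vplus (n : ℕ) (g : ℝ → ℂ) : Prop :=
  ContDiff ℝ n g ∧ tsupport g = Set.Icc (-1 : ℝ) 1 ∧ ∀ x ∈ Set.Ioo (-1 : ℝ) 1, g x ≠ 0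

/-- The `1`-periodic function `ψ(x) = 1 / ∑ₙ g(x+n)`. -/
def psiFun (g : ℝ → ℂ) (x : ℝ) : ℂ := 1 / ∑' n : ℤ, g (x + n)

/-- The auxiliary function `γ_k` (translated so that it is defined near `[k/b, k+1]`). -/
def gammaAux (b : ℝ) (g z : ℝ → ℂ) (k : ℕ) (x : ℝ) : ℂ :=
  (-1 : ℂ) ^ k *
    (∏ j ∈ Finset.Icc 1 k,
      g (x - k - 1 - j * (1 / b - 1)) / g (x - k - j * (1 / b - 1))) *
    (g (x - k - 1) * z (x - k) + (b : ℂ) * psiFun g (x - k))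

/-- The auxiliary function `η_k` (translated so that it is defined near `[-k-1, -k/b]`). -/
def etaAux (b : ℝ) (g z : ℝ → ℂ) (k : ℕ) (x : ℝ) : ℂ :=
  (-1 : ℂ) ^ k *
    (∏ j ∈ Finset.Icc 1 k,
      g (x + k + 1 + j * (1 / b - 1)) / g (x + k + j * (1 / b - 1))) *
    (-(g (x + k + 1) * z (x + k + 1)) + (b : ℂ) * psiFun g (x + k + 1))

/-- The dual window candidate `h_z`, defined piecewise (the pieces are pairwise disjoint). -/
def hz (b : ℝ) (g z : ℝ → ℂ) (x : ℝ) : ℂ :=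
  (starRingEnd ℂ)
    (if x ∈ Set.Ico (-1 : ℝ) 0 then etaAux b g z 0 x
     else if x ∈ Set.Icc (0 : ℝ) 1 then gammaAux b g z 0 x
     else if hk : ∃ k : ℕ, 1 ≤ k ∧ k ≤ kmax b ∧ x ∈ Set.Icc ((k : ℝ) / b) ((k : ℝ) + 1) then
       gammaAux b g z hk.choose x
     else if hk : ∃ k : ℕ, 1 ≤ k ∧ k ≤ kmax b ∧ x ∈ Set.Icc (-(k : ℝ) - 1) (-(k : ℝ) / b) then
       etaAux b g z hk.choose x
     else 0)

/-- The time–frequency shift `M_{bm} T_k w`. -/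
def timeFreqShift (b : ℝ) (m k : ℤ) (w : ℝ → ℂ) : ℝ → ℂ :=
  fun x => Complex.exp (2 * Real.pi * Complex.I * (b : ℂ) * (m : ℂ) * (x : ℂ)) * w (x - k)

/-- The Gabor coefficient `⟨f, M_{bm} T_k w⟩` in `L²(ℝ)`. -/
def gaborCoef (b : ℝ) (w f : ℝ → ℂ) (m k : ℤ) : ℂ :=
  ∫ x : ℝ, f x * (starRingEnd ℂ) (timeFreqShift b m k w x)

/-- The Gabor system `G(w,1,b)` is a Bessel system. -/
def GaborBessel (b : ℝ) (w : ℝ → ℂ) : Prop :=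
  MemLp w 2 (volume : Measure ℝ) ∧
  ∃ B > (0 : ℝ), ∀ f : ℝ → ℂ, MemLp f 2 (volume : Measure ℝ) →
    ∑' mk : ℤ × ℤ, ‖gaborCoef b w f mk.1 mk.2‖ ^ 2 ≤ B * ∫ x : ℝ, ‖f x‖ ^ 2

/-- `G(g,1,b)` and `G(h,1,b)` are dual frames: both Bessel, and every `f ∈ L²(ℝ)` has the
reconstruction `f = ∑_{m,k} ⟨f, M_{bm}T_k g⟩ M_{bm}T_k h` with unconditional `L²`-convergence. -/
def GaborDualFrames (b : ℝ) (g h : ℝ → ℂ) : Prop :=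
  GaborBessel b g ∧ GaborBessel b h ∧
  ∀ f : Lp ℂ 2 (volume : Measure ℝ),
    ∃ F : ℤ × ℤ → Lp ℂ 2 (volume : Measure ℝ),
      (∀ mk : ℤ × ℤ, (F mk : ℝ → ℂ) =ᵐ[volume]
        fun x => gaborCoef b g (f : ℝ → ℂ) mk.1 mk.2 * timeFreqShift b mk.1 mk.2 h x) ∧
      HasSum F f

/-- `F` has a simple discontinuity at `x₀`: both one-sided limits exist but differ. -/
def SimpleDiscontAt (F : ℝ → ℂ) (x₀ : ℝ) : Prop :=
  ∃ l r : ℂ, Tendsto F (𝓝[<] x₀) (𝓝 l) ∧ Tendsto F (𝓝[>] x₀) (𝓝 r) ∧ l ≠ r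

/-- `f` is piecewise `C^{n+1}` with seam points contained in the finite set `s`:
`f` is `C^{n+1}` off `s`, and at each point of `s` the one-sided limits of the
`(n+1)`-st derivative exist. -/
def PiecewiseCn1 (n : ℕ) (f : ℝ → ℂ) (s : Finset ℝ) : Prop :=
  (∀ y : ℝ, y ∉ s → ContDiffAt ℝ (n + 1) f y) ∧
  ∀ y ∈ s, (∃ l, Tendsto (iteratedDeriv (n + 1) f) (𝓝[<] y) (𝓝 l)) ∧
           (∃ r, Tendsto (iteratedDeriv (n + 1) f) (𝓝[>] y) (𝓝 r))

section Aux17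

variable {b : ℝ} {g z : ℝ → ℂ} {n : ℕ}

lemma aux_g_zero (hg : Vplus n g) {x : ℝ} (hx : x ∉ Set.Ioo (-1 : ℝ) 1) : g x = 0 := by
  have hc : Continuous g := hg.1.continuous
  have hcl : IsClosed (g ⁻¹' {0}) := isClosed_singleton.preimage hc
  have hsub : ∀ y : ℝ, y ∉ Set.Icc (-1 : ℝ) 1 → g y = 0 := by
    intro y hy
    by_contra h
    exact hy (hg.2.1 ▸ subset_tsupport g h)
  have h1 : Set.Ici (1 : ℝ) ⊆ g ⁻¹' {0} := by
    rw [← closure_Ioi]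
    apply hcl.closure_subset_iff.mpr
    intro y hy
    simp only [Set.mem_preimage, Set.mem_singleton_iff]
    exact hsub y (by simp only [Set.mem_Icc, not_and, not_le]; intro; exact hy)
  have h2 : Set.Iic (-1 : ℝ) ⊆ g ⁻¹' {0} := by
    rw [← closure_Iio]
    apply hcl.closure_subset_iff.mpr
    intro y hy
    simp only [Set.mem_preimage, Set.mem_singleton_iff]
    apply hsub y
    simp only [Set.mem_Icc, not_and, not_le]
    intro h
    exact absurd hy (by simp only [Set.mem_Iio, not_lt]; linarith)
  simp only [Set.mem_Ioo, not_and, not_lt] at hx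
  rcases le_or_gt x (-1) with h | h
  · exact h2 h
  · exact h1 (hx h)

lemma aux_psi_even (hgeven : ∀ x : ℝ, g x = g (-x)) (x : ℝ) :
    psiFun g (-x) = psiFun g x := by
  unfold psiFun
  congr 1
  calc ∑' n : ℤ, g (-x + n) = ∑' n : ℤ, g (x + ((Equiv.neg ℤ) n : ℤ)) := by
        apply tsum_congr
        intro m
        have h : (-x + (m : ℝ)) = -(x + (((Equiv.neg ℤ) m : ℤ) : ℝ)) := by
          simp only [Equiv.neg_apply]
          push_cast
          ring
        rw [h, ← hgeven]
    _ = ∑' n : ℤ, g (x + n) := Equiv.tsum_eq (Equiv.neg ℤ) (fun n : ℤ => g (x + n))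

lemma aux_psi_add_one (x : ℝ) : psiFun g (x + 1) = psiFun g x := by
  unfold psiFun
  congr 1
  calc ∑' n : ℤ, g (x + 1 + n) = ∑' n : ℤ, g (x + ((Equiv.addRight (1 : ℤ)) n : ℤ)) := by
        apply tsum_congr
        intro m
        congr 1
        simp only [Equiv.coe_addRight]
        push_cast
        ring
    _ = ∑' n : ℤ, g (x + n) := Equiv.tsum_eq (Equiv.addRight (1 : ℤ)) (fun n : ℤ => g (x + n))

lemma aux_psi_one_sub (hgeven : ∀ x : ℝ, g x = g (-x)) (x : ℝ) :
    psiFun g (1 - x) = psiFun g x := by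
  rw [show (1 : ℝ) - x = -x + 1 by ring, aux_psi_add_one, aux_psi_even hgeven]

lemma aux_gammaAux_zero (x : ℝ) :
    gammaAux b g z 0 x = g (x - 1) * z x + (b : ℂ) * psiFun g x := by
  simp [gammaAux]

lemma aux_etaAux_zero (x : ℝ) :
    etaAux b g z 0 x = -(g (x + 1) * z (x + 1)) + (b : ℂ) * psiFun g (x + 1) := by
  simp [etaAux]

lemma aux_hz_pos {x : ℝ} (hx : x ∈ Set.Ioo (0 : ℝ) 1) :
    hz b g z x = (starRingEnd ℂ) (g (x - 1) * z x + (b : ℂ) * psiFun g x) := by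
  unfold hz
  rw [if_neg (by simp only [Set.mem_Ico, not_and, not_lt]; intro; linarith [hx.1]),
    if_pos ⟨hx.1.le, hx.2.le⟩, aux_gammaAux_zero]

lemma aux_hz_neg {x : ℝ} (hx : x ∈ Set.Ioo (0 : ℝ) 1) :
    hz b g z (-x) =
      (starRingEnd ℂ) (-(g (1 - x) * z (1 - x)) + (b : ℂ) * psiFun g (1 - x)) := by
  unfold hz
  rw [if_pos (by constructor <;> [linarith [hx.2]; linarith [hx.1]]), aux_etaAux_zero]
  rw [show -x + 1 = 1 - x by ring]

lemma aux_piece_mono (hb0 : 0 < b) (hb1 : b < 1) {x : ℝ} :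
    ∀ {k k' : ℕ}, 1 ≤ k' → x ∈ Set.Icc ((k : ℝ) / b) ((k : ℝ) + 1) →
      x ∈ Set.Icc ((k' : ℝ) / b) ((k' : ℝ) + 1) → ¬(k < k') := by
  intro k k' hk' h h' hlt
  have h1 : ((k : ℝ) + 1) ≤ (k' : ℝ) := by exact_mod_cast hlt
  have hk'1 : (1 : ℝ) ≤ (k' : ℝ) := by exact_mod_cast hk'
  have h2 : (k' : ℝ) < (k' : ℝ) / b := by
    rw [lt_div_iff₀ hb0]
    nlinarith
  linarith [h.2, h'.1]

lemma aux_piece_unique (hb0 : 0 < b) (hb1 : b < 1) {x : ℝ} {k k' : ℕ} (hk : 1 ≤ k) (hk' : 1 ≤ k')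
    (h : x ∈ Set.Icc ((k : ℝ) / b) ((k : ℝ) + 1))
    (h' : x ∈ Set.Icc ((k' : ℝ) / b) ((k' : ℝ) + 1)) : k = k' := by
  rcases lt_trichotomy k k' with hlt | he | hgt
  · exact absurd hlt (aux_piece_mono hb0 hb1 hk' h h')
  · exact he
  · exact absurd hgt (aux_piece_mono hb0 hb1 hk h' h)

lemma aux_hz_gamma_piece (hb0 : 0 < b) (hb1 : b < 1) {k : ℕ} (hk1 : 1 ≤ k) (hk2 : k ≤ kmax b)
    {x : ℝ} (hx : x ∈ Set.Icc ((k : ℝ) / b) ((k : ℝ) + 1)) :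
    hz b g z x = (starRingEnd ℂ) (gammaAux b g z k x) := by
  have hk1R : (1 : ℝ) ≤ (k : ℝ) := by exact_mod_cast hk1
  have hx1 : 1 < x := by
    have : (k : ℝ) < (k : ℝ) / b := by rw [lt_div_iff₀ hb0]; nlinarith
    linarith [hx.1]
  unfold hz
  rw [if_neg (by simp only [Set.mem_Ico, not_and, not_lt]; intro; linarith),
    if_neg (by simp only [Set.mem_Icc, not_and, not_le]; intro; linarith)]
  have hex : ∃ k' : ℕ, 1 ≤ k' ∧ k' ≤ kmax b ∧ x ∈ Set.Icc ((k' : ℝ) / b) ((k' : ℝ) + 1) :=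
    ⟨k, hk1, hk2, hx⟩
  rw [dif_pos hex]
  have huniq : hex.choose = k :=
    aux_piece_unique hb0 hb1 hex.choose_spec.1 hk1 hex.choose_spec.2.2 hx
  rw [huniq]

lemma aux_hz_eta_piece (hb0 : 0 < b) (hb1 : b < 1) {k : ℕ} (hk1 : 1 ≤ k) (hk2 : k ≤ kmax b)
    {x : ℝ} (hx : x ∈ Set.Icc ((k : ℝ) / b) ((k : ℝ) + 1)) :
    hz b g z (-x) = (starRingEnd ℂ) (etaAux b g z k (-x)) := by
  have hk1R : (1 : ℝ) ≤ (k : ℝ) := by exact_mod_cast hk1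
  have hx1 : 1 < x := by
    have : (k : ℝ) < (k : ℝ) / b := by rw [lt_div_iff₀ hb0]; nlinarith
    linarith [hx.1]
  have hkb : 0 < (k : ℝ) / b := by positivity
  unfold hz
  rw [if_neg (by simp only [Set.mem_Ico, not_and, not_lt]; intro; linarith),
    if_neg (by simp only [Set.mem_Icc, not_and, not_le]; intro; linarith)]
  rw [dif_neg (by
    rintro ⟨k', hk'1, _, hmem⟩
    have hk'R : (1 : ℝ) ≤ (k' : ℝ) := by exact_mod_cast hk'1
    have : 0 < (k' : ℝ) / b := by positivity
    linarith [hmem.1])]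
  have hex : ∃ k' : ℕ, 1 ≤ k' ∧ k' ≤ kmax b ∧
      -x ∈ Set.Icc (-(k' : ℝ) - 1) (-(k' : ℝ) / b) :=
    ⟨k, hk1, hk2, ⟨by linarith [hx.2], by rw [neg_div]; linarith [hx.1]⟩⟩
  rw [dif_pos hex]
  have hc := hex.choose_spec
  have hmem : x ∈ Set.Icc ((hex.choose : ℝ) / b) ((hex.choose : ℝ) + 1) := by
    obtain ⟨h1, h2⟩ := hc.2.2
    rw [neg_div] at h2
    exact ⟨by linarith, by linarith⟩
  have huniq : hex.choose = k := aux_piece_unique hb0 hb1 hc.1 hk1 hmem hx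
  rw [huniq]

lemma aux_gamma_eta (hgeven : ∀ x : ℝ, g x = g (-x)) (k : ℕ) (x : ℝ)
    (hzk : z (x - k) = -z (1 - (x - k))) :
    gammaAux b g z k x = etaAux b g z k (-x) := by
  unfold gammaAux etaAux
  congr 1
  · congr 1
    apply Finset.prod_congr rfl
    intro j _
    rw [show -x + (k : ℝ) + 1 + (j : ℝ) * (1 / b - 1) =
        -(x - (k : ℝ) - 1 - (j : ℝ) * (1 / b - 1)) by ring, ← hgeven,
      show -x + (k : ℝ) + (j : ℝ) * (1 / b - 1) =
        -(x - (k : ℝ) - (j : ℝ) * (1 / b - 1)) by ring, ← hgeven]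
  · rw [show -x + (k : ℝ) + 1 = 1 - (x - (k : ℝ)) by ring, aux_psi_one_sub hgeven,
      show g (1 - (x - (k : ℝ))) = g (x - (k : ℝ) - 1) by
        rw [show (1 : ℝ) - (x - (k : ℝ)) = -(x - (k : ℝ) - 1) by ring, ← hgeven],
      hzk]
    ring

lemma aux_hz_gap (hb0 : 0 < b) {x : ℝ} (hx1 : 1 < x)
    (hgap : ∀ k : ℕ, 1 ≤ k → k ≤ kmax b → x ∉ Set.Icc ((k : ℝ) / b) ((k : ℝ) + 1)) :
    hz b g z x = 0 ∧ hz b g z (-x) = 0 := by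
  constructor
  · unfold hz
    rw [if_neg (by simp only [Set.mem_Ico, not_and, not_lt]; intro; linarith),
      if_neg (by simp only [Set.mem_Icc, not_and, not_le]; intro; linarith),
      dif_neg (by rintro ⟨k, hk1, hk2, hmem⟩; exact hgap k hk1 hk2 hmem),
      dif_neg (by
        rintro ⟨k, hk1, _, hmem⟩
        have hk1R : (1 : ℝ) ≤ (k : ℝ) := by exact_mod_cast hk1
        have : 0 < (k : ℝ) / b := by positivity
        rw [neg_div] at hmem
        linarith [hmem.2]), map_zero]
  · unfold hz
    rw [if_neg (by simp only [Set.mem_Ico, not_and, not_lt]; intro; linarith),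
      if_neg (by simp only [Set.mem_Icc, not_and, not_le]; intro; linarith),
      dif_neg (by
        rintro ⟨k, hk1, _, hmem⟩
        have hk1R : (1 : ℝ) ≤ (k : ℝ) := by exact_mod_cast hk1
        have : 0 < (k : ℝ) / b := by positivity
        linarith [hmem.1]),
      dif_neg (by
        rintro ⟨k, hk1, hk2, hmem⟩
        apply hgap k hk1 hk2
        rw [neg_div] at hmem
        exact ⟨by linarith [hmem.2], by linarith [hmem.1]⟩), map_zero]

lemma aux_forward_pt (hg : Vplus n g) (hgeven : ∀ x : ℝ, g x = g (-x)) {x : ℝ}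
    (hx : x ∈ Set.Ioo (0 : ℝ) 1) (h : hz b g z x = hz b g z (-x)) :
    z x = -z (1 - x) := by
  rw [aux_hz_pos hx, aux_hz_neg hx] at h
  have h2 := (starRingEnd ℂ).injective h
  rw [aux_psi_one_sub hgeven,
    show g (1 - x) = g (x - 1) by rw [show (1 : ℝ) - x = -(x - 1) by ring, ← hgeven]] at h2
  have hne : g (x - 1) ≠ 0 :=
    hg.2.2 (x - 1) ⟨by linarith [hx.1], by linarith [hx.2]⟩
  have h3 : g (x - 1) * z x = g (x - 1) * (-z (1 - x)) := by linear_combination h2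
  exact mul_left_cancel₀ hne h3

lemma aux_backward_pt (hb0 : 0 < b) (hb1 : b < 1) (hgeven : ∀ x : ℝ, g x = g (-x))
    {x : ℝ} (hx0 : 0 < x)
    (hne : ∀ k : ℕ, x ≠ (k : ℝ) ∧ x ≠ (k : ℝ) / b)
    (hzs : ∀ k : ℕ, x - (k : ℝ) ∈ Set.Ioo (0 : ℝ) 1 → z (x - k) = -z (1 - (x - k))) :
    hz b g z x = hz b g z (-x) := by
  have hx1 : x ≠ 1 := by
    have := (hne 1).1
    simpa using this
  rcases lt_or_gt_of_ne hx1 with hxlt | hxgt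
  · -- x ∈ (0,1)
    have hxI : x ∈ Set.Ioo (0 : ℝ) 1 := ⟨hx0, hxlt⟩
    rw [aux_hz_pos hxI, aux_hz_neg hxI]
    congr 1
    have hz0 := hzs 0 (by simpa using hxI)
    simp only [Nat.cast_zero, sub_zero] at hz0
    rw [aux_psi_one_sub hgeven,
      show g (1 - x) = g (x - 1) by rw [show (1 : ℝ) - x = -(x - 1) by ring, ← hgeven],
      hz0]
    ring
  · by_cases hex : ∃ k : ℕ, 1 ≤ k ∧ k ≤ kmax b ∧ x ∈ Set.Icc ((k : ℝ) / b) ((k : ℝ) + 1)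
    · obtain ⟨k, hk1, hk2, hxk⟩ := hex
      rw [aux_hz_gamma_piece hb0 hb1 hk1 hk2 hxk, aux_hz_eta_piece hb0 hb1 hk1 hk2 hxk]
      congr 1
      apply aux_gamma_eta hgeven
      apply hzs
      have hk1R : (1 : ℝ) ≤ (k : ℝ) := by exact_mod_cast hk1
      have hkb : (k : ℝ) ≤ (k : ℝ) / b := by
        rw [le_div_iff₀ hb0]; nlinarith
      have hxne : x ≠ (k : ℝ) / b := (hne k).2
      have hxne2 : x ≠ (k : ℝ) + 1 := by
        have := (hne (k + 1)).1
        push_cast at this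
        exact this
      constructor
      · have : (k : ℝ) / b < x := lt_of_le_of_ne hxk.1 (Ne.symm hxne)
        linarith
      · have : x < (k : ℝ) + 1 := lt_of_le_of_ne hxk.2 hxne2
        linarith
    · push_neg at hex
      obtain ⟨h1, h2⟩ := aux_hz_gap (z := z) hb0 hxgt hex
      rw [h1, h2]

end Aux17

/-- **Small support, part (c).** -/
theorem statement17 (n : ℕ) (N : ℕ) (hN : 0 < N) (b : ℝ)
    (hb : b ∈ Set.Ico ((N : ℝ) / ((N : ℝ) + 1)) ((2 * (N : ℝ)) / (2 * (N : ℝ) + 1)))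
    (g : ℝ → ℂ) (hg : Vplus n g) (hgeven : ∀ x : ℝ, g x = g (-x))
    (z : ℝ → ℂ) (hzmeas : Measurable z)
    (hz1 : ∀ x ∈ Set.Icc (0 : ℝ) (1 - (N : ℝ) * (1 / b - 1)),
      z x = (b : ℂ) * psiFun g x / g x)
    (hz3 : ∀ x ∈ Set.Icc ((N : ℝ) * (1 / b - 1)) 1,
      z x = -((b : ℂ) * psiFun g x / g (x - 1))) :
    (∀ᵐ x : ℝ, hz b g z x = hz b g z (-x)) ↔
      (∀ᵐ x ∂((volume : Measure ℝ).restrict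
          (Set.Ioc (1 - (N : ℝ) * (1 / b - 1)) (1 / 2))),
        z x = -z (1 - x)) := by
  have hN0 : (0 : ℝ) < (N : ℝ) := by exact_mod_cast hN
  have hN1 : (1 : ℝ) ≤ (N : ℝ) := by exact_mod_cast hN
  have hb0 : 0 < b := lt_of_lt_of_le (by positivity) hb.1
  have hb1 : b < 1 := by
    have h2 : (2 * (N : ℝ)) / (2 * (N : ℝ) + 1) < 1 := by
      rw [div_lt_one (by linarith)]; linarith
    linarith [hb.2]
  have hbl : (N : ℝ) ≤ b * ((N : ℝ) + 1) := by
    have := (div_le_iff₀ (by linarith : (0:ℝ) < (N : ℝ) + 1)).mp hb.1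
    linarith
  have hbu : b * (2 * (N : ℝ) + 1) < 2 * (N : ℝ) := by
    have := (lt_div_iff₀ (by linarith : (0:ℝ) < 2 * (N : ℝ) + 1)).mp hb.2
    linarith
  have hNd_le : (N : ℝ) * (1 / b - 1) ≤ 1 := by
    rw [mul_sub, mul_one, mul_one_div, sub_le_iff_le_add, div_le_iff₀ hb0]
    nlinarith
  have hNd_half : 1 / 2 < (N : ℝ) * (1 / b - 1) := by
    have h : (1 / 2 + (N : ℝ)) < (N : ℝ) / b := by rw [lt_div_iff₀ hb0]; nlinarith
    have h2 : (N : ℝ) * (1 / b - 1) = (N : ℝ) / b - (N : ℝ) := by ring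
    rw [h2]; linarith
  constructor
  · -- h_z even ⇒ antisymmetry of z on the middle interval
    intro hL
    rw [ae_restrict_iff' measurableSet_Ioc]
    filter_upwards [hL] with x hx hmem
    have hxI : x ∈ Set.Ioo (0 : ℝ) 1 := ⟨by linarith [hmem.1], by linarith [hmem.2]⟩
    exact aux_forward_pt hg hgeven hxI hx
  · -- antisymmetry ⇒ h_z even a.e.
    intro hR
    rw [ae_restrict_iff' measurableSet_Ioc] at hR
    -- reflected version of hR
    have hR' : ∀ᵐ x : ℝ, (1 - x) ∈ Set.Ioc (1 - (N : ℝ) * (1 / b - 1)) (1 / 2) →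
        z (1 - x) = -z (1 - (1 - x)) := by
      rw [ae_iff] at hR ⊢
      exact (Measure.measurePreserving_sub_left (volume : Measure ℝ)
        1).quasiMeasurePreserving.preimage_null hR
    have hae : ∀ᵐ x : ℝ, x ∈ Set.Ioo (0 : ℝ) 1 → z x = -z (1 - x) := by
      filter_upwards [hR, hR'] with x h1 h2 hx
      rcases le_or_gt x (1 - (N : ℝ) * (1 / b - 1)) with hxa | hxa
      · rw [hz1 x ⟨hx.1.le, hxa⟩, hz3 (1 - x) ⟨by linarith, by linarith [hx.1]⟩,
          aux_psi_one_sub hgeven, show (1 : ℝ) - x - 1 = -x by ring, ← hgeven]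
        ring
      · rcases le_or_gt x (1 / 2) with hx2 | hx2
        · exact h1 ⟨hxa, hx2⟩
        · rcases lt_or_ge x ((N : ℝ) * (1 / b - 1)) with hxN | hxN
          · have h2' := h2 ⟨by linarith, by linarith⟩
            rw [show (1 : ℝ) - (1 - x) = x by ring] at h2'
            rw [h2', neg_neg]
          · rw [hz3 x ⟨hxN, hx.2.le⟩, hz1 (1 - x) ⟨by linarith [hx.2], by linarith⟩,
              aux_psi_one_sub hgeven, show (1 : ℝ) - x = -(x - 1) by ring, ← hgeven]
    set S : Set ℝ := {y : ℝ | y ∈ Set.Ioo (0 : ℝ) 1 ∧ z y ≠ -z (1 - y)} with hSdef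
    have hSnull : volume S = 0 := by
      rw [ae_iff] at hae
      apply measure_mono_null _ hae
      intro y hy
      simp only [Set.mem_setOf_eq, Classical.not_imp]
      exact hy
    set bad : Set ℝ := ⋃ k : ℕ,
      (({(k : ℝ), -(k : ℝ), (k : ℝ) / b, -((k : ℝ) / b)} : Set ℝ) ∪
        ((fun y : ℝ => y - (k : ℝ)) ⁻¹' S ∪ (fun y : ℝ => -y - (k : ℝ)) ⁻¹' S)) with hbaddef
    have hbadnull : volume bad = 0 := by
      apply measure_iUnion_null
      intro k
      apply measure_union_null
      · exact Set.Countable.measure_zero (Set.toFinite _).countable _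
      · apply measure_union_null
        · exact (measurePreserving_sub_right (volume : Measure ℝ)
            (k : ℝ)).quasiMeasurePreserving.preimage_null hSnull
        · have he : (fun y : ℝ => -y - (k : ℝ)) = (fun y : ℝ => (-(k : ℝ)) - y) := by
            funext y; ring
          rw [he]
          exact (Measure.measurePreserving_sub_left (volume : Measure ℝ)
            (-(k : ℝ))).quasiMeasurePreserving.preimage_null hSnull
    rw [ae_iff]
    apply measure_mono_null _ hbadnull
    intro x hx
    by_contra hxbad
    apply hx
    simp only [hbaddef, Set.mem_iUnion, Set.mem_union, Set.mem_insert_iff,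
      Set.mem_singleton_iff, Set.mem_preimage, not_exists, not_or] at hxbad
    have hzofS : ∀ y : ℝ, y ∉ S → y ∈ Set.Ioo (0 : ℝ) 1 → z y = -z (1 - y) := by
      intro y hyS hyI
      by_contra hne
      exact hyS ⟨hyI, hne⟩
    have hx0 : x ≠ 0 := by
      have := (hxbad 0).1.1
      simpa using this
    rcases lt_or_gt_of_ne hx0 with hxneg | hxpos
    · have hres := aux_backward_pt hb0 hb1 hgeven (x := -x) (by linarith)
        (fun k => ⟨by
            have := (hxbad k).1.2.1
            intro hcon; exact this (by linarith [hcon]), by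
            have := (hxbad k).1.2.2.2
            intro hcon; exact this (by linarith [hcon])⟩)
        (fun k hk => hzofS _ (by
            have := (hxbad k).2.2
            simpa using this) hk)
      rw [neg_neg] at hres
      exact hres.symm
    · exact aux_backward_pt hb0 hb1 hgeven hxpos
        (fun k => ⟨(hxbad k).1.1, (hxbad k).1.2.2.1⟩)
        (fun k hk => hzofS _ ((hxbad k).2.1) hk)

end
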